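/- Let S¹ := {u ∈ ℝ² : |u| = 1} be the unit circle, equipped with its geodesic distance d_{S¹}(u,v) := arccos(u·v). For every n ∈ ℕ and every ε > 0, there exists no function f : S¹ → ℝⁿ such that |f(u) − f(v)| = d_{S¹}(u,v) for all u, v ∈ S¹ with d_{S¹}(u,v) < ε. -/

import Mathlib

open Real

noncomputable def circPt (θ : ℝ) : EuclideanSpace ℝ (Fin 2) :=
  WithLp.toLp 2 (fun i => if i = 0 then Real.cos θ else Real.sin θ)

lemma circPt_inner (a b : ℝ) :
    (inner ℝ (circPt a) (circPt b) : ℝ) = Real.cos (a - b) := by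
  simp only [circPt, PiLp.inner_apply, PiLp.toLp_apply, RCLike.inner_apply, Fin.sum_univ_two,
    starRingEnd_apply, star_trivial]
  simp [Real.cos_sub]; ring

lemma circPt_mem : ∀ θ : ℝ, circPt θ ∈ Metric.sphere (0 : EuclideanSpace ℝ (Fin 2)) 1 := by
  intro θ
  rw [mem_sphere_zero_iff_norm]
  have h : (inner ℝ (circPt θ) (circPt θ) : ℝ) = 1 := by
    rw [circPt_inner]; simp
  have h2 := real_inner_self_eq_norm_sq (circPt θ)
  nlinarith [norm_nonneg (circPt θ)]

lemma diff_eq_of_norms {E : Type*} [NormedAddCommGroup E] [InnerProductSpace ℝ E]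
    {x y : E} {d : ℝ} (hx : ‖x‖ = d) (hy : ‖y‖ = d) (hxy : ‖x + y‖ = 2 * d) : x = y := by
  have h1 := norm_add_sq_real x y
  have h2 := norm_sub_sq_real x y
  rw [hx, hy] at h1 h2
  rw [hxy] at h1
  have h3 : ‖x - y‖ ^ 2 = 0 := by nlinarith [h1, h2]
  have : ‖x - y‖ = 0 := by nlinarith [norm_nonneg (x - y)]
  have := norm_eq_zero.mp this
  exact sub_eq_zero.mp this

/-- On the unit circle `S¹ ⊆ ℝ²` with geodesic distance `d_{S¹}(u,v) = arccos(u·v)`: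
for every `n` and every `ε > 0` there is no map `f : S¹ → ℝⁿ` with
`|f(u) − f(v)| = d_{S¹}(u,v)` whenever `d_{S¹}(u,v) < ε`. -/
theorem no_local_isometry_of_circle (n : ℕ) (ε : ℝ) (hε : 0 < ε) :
    ¬ ∃ f : (Metric.sphere (0 : EuclideanSpace ℝ (Fin 2)) 1) → EuclideanSpace ℝ (Fin n),
      ∀ u v : (Metric.sphere (0 : EuclideanSpace ℝ (Fin 2)) 1),
        Real.arccos (inner ℝ (u : EuclideanSpace ℝ (Fin 2)) (v : EuclideanSpace ℝ (Fin 2))) < ε →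
        ‖f u - f v‖ =
          Real.arccos (inner ℝ (u : EuclideanSpace ℝ (Fin 2)) (v : EuclideanSpace ℝ (Fin 2))) := by
  rintro ⟨f, hf⟩
  have hπ := Real.pi_pos
  set N : ℕ := max 4 (⌈4 * π / ε⌉₊ + 1) with hNdef
  have hN4 : (4 : ℕ) ≤ N := le_max_left _ _
  have hNpos : 0 < N := by omega
  have hNR : (0 : ℝ) < N := by exact_mod_cast hNpos
  have hN4R : (4 : ℝ) ≤ N := by exact_mod_cast hN4
  set δ : ℝ := 2 * π / N with hδdef
  have hδpos : 0 < δ := by positivity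
  have hδN : δ * N = 2 * π := by rw [hδdef]; field_simp
  have hδle : 2 * δ ≤ π := by nlinarith [hδN, hN4R, hδpos]
  have hδeps : 2 * δ < ε := by
    have h1 : 4 * π / ε < N := by
      have h2 : (⌈4 * π / ε⌉₊ + 1 : ℕ) ≤ N := le_max_right _ _
      have h3 : 4 * π / ε ≤ ⌈4 * π / ε⌉₊ := Nat.le_ceil _
      have h4 : ((⌈4 * π / ε⌉₊ : ℝ) + 1) ≤ N := by exact_mod_cast h2
      linarith
    rw [div_lt_iff₀ hε] at h1
    nlinarith [hδN, hNR]
  have hδeps1 : δ < ε := by linarith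
  -- the sample points
  set P : ℕ → (Metric.sphere (0 : EuclideanSpace ℝ (Fin 2)) 1) :=
    fun k => ⟨circPt (k * δ), circPt_mem _⟩ with hPdef
  have hinner : ∀ k j : ℕ, (inner ℝ ((P k) : EuclideanSpace ℝ (Fin 2))
      ((P j) : EuclideanSpace ℝ (Fin 2)) : ℝ) = Real.cos ((k : ℝ) * δ - (j : ℝ) * δ) := by
    intro k j
    exact circPt_inner _ _
  have harccos1 : ∀ k : ℕ, Real.arccos (inner ℝ ((P k) : EuclideanSpace ℝ (Fin 2))
      ((P (k + 1)) : EuclideanSpace ℝ (Fin 2))) = δ := by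
    intro k
    rw [hinner]
    have : (k : ℝ) * δ - ((k + 1 : ℕ) : ℝ) * δ = -δ := by push_cast; ring
    rw [this, Real.cos_neg, Real.arccos_cos hδpos.le (by linarith)]
  have harccos2 : ∀ k : ℕ, Real.arccos (inner ℝ ((P k) : EuclideanSpace ℝ (Fin 2))
      ((P (k + 2)) : EuclideanSpace ℝ (Fin 2))) = 2 * δ := by
    intro k
    rw [hinner]
    have : (k : ℝ) * δ - ((k + 2 : ℕ) : ℝ) * δ = -(2 * δ) := by push_cast; ring
    rw [this, Real.cos_neg, Real.arccos_cos (by linarith) hδle]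
  have hc1 : ∀ k : ℕ, ‖f (P k) - f (P (k + 1))‖ = δ := by
    intro k
    rw [hf _ _ (by rw [harccos1]; linarith), harccos1]
  have hc2 : ∀ k : ℕ, ‖f (P k) - f (P (k + 2))‖ = 2 * δ := by
    intro k
    rw [hf _ _ (by rw [harccos2]; linarith), harccos2]
  have key : ∀ k : ℕ, f (P k) - f (P (k + 1)) = f (P (k + 1)) - f (P (k + 2)) := by
    intro k
    refine diff_eq_of_norms (hc1 k) (hc1 (k + 1)) ?_
    rw [show (f (P k) - f (P (k + 1))) + (f (P (k + 1)) - f (P (k + 2)))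
        = f (P k) - f (P (k + 2)) from by abel]
    exact hc2 k
  have hconst : ∀ k : ℕ, f (P k) - f (P (k + 1)) = f (P 0) - f (P 1) := by
    intro k
    induction k with
    | zero => rfl
    | succ m ih => rw [← key m]; exact ih
  have htel : f (P 0) - f (P N) = N • (f (P 0) - f (P 1)) := by
    rw [← Finset.sum_range_sub' (fun k => f (P k)) N]
    rw [Finset.sum_congr rfl (fun i _ => hconst i), Finset.sum_const, Finset.card_range]
  have hPN : P N = P 0 := by
    apply Subtype.ext
    have hNδ : (N : ℝ) * δ = 2 * π := by
      rw [hδdef]; field_simp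
    show circPt ((N : ℝ) * δ) = circPt ((0 : ℕ) * δ)
    rw [hNδ]
    have : ((0 : ℕ) : ℝ) * δ = 0 := by simp
    rw [this]
    ext i
    simp [circPt, Real.cos_two_pi, Real.sin_two_pi]
  have hzero : f (P 0) - f (P N) = 0 := by rw [hPN]; simp
  rw [hzero] at htel
  have hv : f (P 0) - f (P 1) = 0 := by
    have htel' : ((N : ℝ)) • (f (P 0) - f (P 1)) = 0 := by
      rw [Nat.cast_smul_eq_nsmul]; exact htel.symm
    rcases smul_eq_zero.mp htel' with h | h
    · exact absurd h (by exact_mod_cast hNpos.ne')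
    · exact h
  have := hc1 0
  rw [show (0 + 1 : ℕ) = 1 from rfl] at this
  rw [hv] at this
  simp at this
  linarith
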